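/- Let R be a rack, X an R-set, and p : X → R a map satisfying the generalized augmentation identity p(x·r) = p(x) ◁ r for all x ∈ X, r ∈ R (a generalized augmented rack). Define x ◁ y := x·p(y) on X. Then: (i) (X, ◁) is a rack (each map x ↦ x ◁ y is bijective and ◁ is self-distributive); (ii) p : (X,◁) → R is a morphism of racks, p(x ◁ y) = p(x) ◁ p(y); (iii) R acts on the rack (X,◁) by rack automorphisms, i.e. (x ◁ y)·r = (x·r) ◁ (y·r); and (iv) p is equivariant and the Peiffer identity x·p(y) = x ◁ y holds. Hence p : X → R is a crossed module of racks, and conversely every crossed module of racks arises this way, so crossed modules of racks are in one-to-one correspondence with generalized augmented racks. -/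

import Mathlib

/-- A right rack. -/
class RightRack (R : Type*) where
  act : R → R → R
  act_bij : ∀ y : R, Function.Bijective (fun x => act x y)
  self_distrib : ∀ x y z : R, act (act x y) z = act (act x z) (act y z)

/-- A generalized augmented rack: a rack `R`, an `R`-set `X` and a map `p : X → R`
satisfying the generalized augmentation identity `p (x · r) = p(x) ◁ r`. -/
structure GenAugRack (X R : Type*) [RightRack R] where
  smul : X → R → X
  smul_bij : ∀ r : R, Function.Bijective (fun x => smul x r)
  smul_act : ∀ (x : X) (r r' : R),
    smul (smul x r) r' = smul (smul x r') (RightRack.act r r')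
  p : X → R
  aug : ∀ (x : X) (r : R), p (smul x r) = RightRack.act (p x) r

/-- A crossed module of racks with target the rack `R`: a rack structure on `X`,
a rack morphism `μ : X → R`, and an action of `R` on the rack `X` by rack
automorphisms, such that `μ` is equivariant and the Peiffer identity holds. -/
structure RackCrossedModule (X R : Type*) [RightRack R] where
  act : X → X → X
  act_bij : ∀ y : X, Function.Bijective (fun x => act x y)
  self_distrib : ∀ x y z : X, act (act x y) z = act (act x z) (act y z)
  μ : X → R
  μ_hom : ∀ x y : X, μ (act x y) = RightRack.act (μ x) (μ y)
  smul : X → R → X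
  smul_bij : ∀ r : R, Function.Bijective (fun x => smul x r)
  smul_act : ∀ (x : X) (r r' : R),
    smul (smul x r) r' = smul (smul x r') (RightRack.act r r')
  smul_aut : ∀ (x y : X) (r : R), smul (act x y) r = act (smul x r) (smul y r)
  equivar : ∀ (x : X) (r : R), μ (smul x r) = RightRack.act (μ x) r
  peiffer : ∀ x y : X, smul x (μ y) = act x y

/-- given a generalized augmented rack `p : X → R`, the operation
`x ◁ y := x · p(y)` makes `X` a rack, `p` a rack morphism, the `R`-action is by rack
automorphisms, `p` is equivariant and the Peiffer identity holds; hence `p : X → R`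
is a crossed module of racks. Conversely every crossed module of racks arises this
way: crossed modules of racks are in one-to-one correspondence with generalized
augmented racks. -/

private def GenAugRack.toCM {X R : Type*} [RightRack R] (A : GenAugRack X R) :
    RackCrossedModule X R where
  act x y := A.smul x (A.p y)
  act_bij y := A.smul_bij _
  self_distrib x y z := by rw [A.smul_act, A.aug]
  μ := A.p
  μ_hom x y := A.aug x (A.p y)
  smul := A.smul
  smul_bij := A.smul_bij
  smul_act := A.smul_act
  smul_aut x y r := by rw [A.smul_act, A.aug]
  equivar := A.aug
  peiffer x y := rfl

private theorem RackCrossedModule.ext' {X R : Type*} [RightRack R]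
    (C D : RackCrossedModule X R) (h1 : C.act = D.act) (h2 : C.μ = D.μ)
    (h3 : C.smul = D.smul) : C = D := by
  cases C; cases D; simp_all

theorem genAugRack_equiv_rackCrossedModule (X R : Type*) [RightRack R] :
    (∀ A : GenAugRack X R,
      -- (i) `x ◁ y := x · p(y)` is a rack structure on `X`
      (∀ y : X, Function.Bijective (fun x : X => A.smul x (A.p y))) ∧
      (∀ x y z : X,
        A.smul (A.smul x (A.p y)) (A.p z) =
          A.smul (A.smul x (A.p z)) (A.p (A.smul y (A.p z)))) ∧
      -- (ii) `p` is a morphism of racks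
      (∀ x y : X, A.p (A.smul x (A.p y)) = RightRack.act (A.p x) (A.p y)) ∧
      -- (iii) `R` acts on the rack `X` by rack automorphisms
      (∀ (x y : X) (r : R),
        A.smul (A.smul x (A.p y)) r = A.smul (A.smul x r) (A.p (A.smul y r))) ∧
      -- (iv) `p` is equivariant (and the Peiffer identity holds by definition)
      (∀ (x : X) (r : R), A.p (A.smul x r) = RightRack.act (A.p x) r)) ∧
    Nonempty (GenAugRack X R ≃ RackCrossedModule X R) := by
  constructor
  · intro A
    refine ⟨fun y => A.smul_bij _, ?_, fun x y => A.aug x (A.p y), ?_, A.aug⟩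
    · intro x y z
      rw [A.smul_act, A.aug]
    · intro x y r
      rw [A.smul_act, A.aug]
  · exact ⟨⟨GenAugRack.toCM, fun C => ⟨C.smul, C.smul_bij, C.smul_act, C.μ, C.equivar⟩,
      fun A => rfl,
      fun C => RackCrossedModule.ext' _ _
        (funext fun x => funext fun y => C.peiffer x y) rfl rfl⟩⟩
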